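/- arXiv:math-ph/0610088 — 7 statements merged into one kernel-verified Lean document; each statement's English description precedes it below -/
import Mathlib

section
/- Let n ≥ 1 and let g, k : ℝ → ℂⁿ be functions that are differentiable at every x ≠ 0 with derivatives g′ and k′, such that g, g′, k, k′ are square-integrable on ℝ, g and k have one-sided limits g(0+), g(0−), k(0+), k(0−) at 0, and g(x) → 0, k(x) → 0 as x → +∞ and as x → −∞. Then the functions x ↦ ⟨−i g′(x), k(x)⟩ and x ↦ ⟨g(x), −i k′(x)⟩ are integrable on ℝ and ∫_ℝ ⟨−i g′(x), k(x)⟩ dx − ∫_ℝ ⟨g(x), −i k′(x)⟩ dx = i⟨g(0+), k(0+)⟩ − i⟨g(0−), k(0−)⟩. -/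
open MeasureTheory Filter Set

lemma integrable_inner_of_memL2 {n : ℕ} {f h : ℝ → EuclideanSpace ℂ (Fin n)}
    (hf : MemLp f 2 (volume : Measure ℝ)) (hh : MemLp h 2 (volume : Measure ℝ)) :
    Integrable (fun x : ℝ => (inner ℂ (f x) (h x) : ℂ)) volume := by
  have H := L2.integrable_inner (𝕜 := ℂ) (hf.toLp f) (hh.toLp h)
  refine H.congr ?_
  filter_upwards [hf.coeFn_toLp, hh.coeFn_toLp] with x hx hy
  rw [hx, hy]

/-- Abstract Green identity for the adjoint of the momentum operator `-i d/dx`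
restricted to functions vanishing at `0`.  The pairing `⟨a, b⟩` of the paper is
linear in the first argument, i.e. `⟨a, b⟩ = inner b a` in Mathlib's convention. -/
theorem stmt_0 (n : ℕ) (hn : 1 ≤ n)
    (g k g' k' : ℝ → EuclideanSpace ℂ (Fin n))
    (hg : ∀ x : ℝ, x ≠ 0 → HasDerivAt g (g' x) x)
    (hk : ∀ x : ℝ, x ≠ 0 → HasDerivAt k (k' x) x)
    (hgL2 : MemLp g 2 (volume : Measure ℝ))
    (hg'L2 : MemLp g' 2 (volume : Measure ℝ))
    (hkL2 : MemLp k 2 (volume : Measure ℝ))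
    (hk'L2 : MemLp k' 2 (volume : Measure ℝ))
    (gp gm kp km : EuclideanSpace ℂ (Fin n))
    (hgp : Tendsto g (nhdsWithin 0 (Ioi 0)) (nhds gp))
    (hgm : Tendsto g (nhdsWithin 0 (Iio 0)) (nhds gm))
    (hkp : Tendsto k (nhdsWithin 0 (Ioi 0)) (nhds kp))
    (hkm : Tendsto k (nhdsWithin 0 (Iio 0)) (nhds km))
    (hgtop : Tendsto g atTop (nhds 0)) (hgbot : Tendsto g atBot (nhds 0))
    (hktop : Tendsto k atTop (nhds 0)) (hkbot : Tendsto k atBot (nhds 0)) :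
    Integrable (fun x : ℝ => (inner ℂ (k x) ((-Complex.I) • g' x) : ℂ)) volume ∧
    Integrable (fun x : ℝ => (inner ℂ ((-Complex.I) • k' x) (g x) : ℂ)) volume ∧
    (∫ x : ℝ, (inner ℂ (k x) ((-Complex.I) • g' x) : ℂ)) -
      (∫ x : ℝ, (inner ℂ ((-Complex.I) • k' x) (g x) : ℂ)) =
      Complex.I * (inner ℂ kp gp : ℂ) - Complex.I * (inner ℂ km gm : ℂ) := by
  -- integrability of the two pointwise inner products
  have h1 : Integrable (fun x : ℝ => (inner ℂ (k x) (g' x) : ℂ)) volume :=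
    integrable_inner_of_memL2 hkL2 hg'L2
  have h2 : Integrable (fun x : ℝ => (inner ℂ (k' x) (g x) : ℂ)) volume :=
    integrable_inner_of_memL2 hk'L2 hgL2
  have e1 : (fun x : ℝ => (inner ℂ (k x) ((-Complex.I) • g' x) : ℂ))
      = fun x : ℝ => (-Complex.I) * (inner ℂ (k x) (g' x) : ℂ) := by
    funext x; rw [inner_smul_right]
  have e2 : (fun x : ℝ => (inner ℂ ((-Complex.I) • k' x) (g x) : ℂ))
      = fun x : ℝ => Complex.I * (inner ℂ (k' x) (g x) : ℂ) := by
    funext x; rw [inner_smul_left]; simp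
  refine ⟨by rw [e1]; exact h1.const_mul _, by rw [e2]; exact h2.const_mul _, ?_⟩
  set F : ℝ → ℂ := fun x => (inner ℂ (k x) (g x) : ℂ) with hF
  set F' : ℝ → ℂ := fun x => (inner ℂ (k x) (g' x) : ℂ) + (inner ℂ (k' x) (g x) : ℂ) with hF'
  have hFd : ∀ x : ℝ, x ≠ 0 → HasDerivAt F (F' x) x := fun x hx =>
    (hk x hx).inner ℂ (hg x hx)
  have hint : Integrable F' volume := h1.add h2
  -- limit of F at +∞ and -∞ is 0
  have hFtop : Tendsto F atTop (nhds 0) := by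
    simpa using hktop.inner (𝕜 := ℂ) hgtop
  have hFbot : Tendsto F atBot (nhds 0) := by
    simpa using hkbot.inner (𝕜 := ℂ) hgbot
  -- integral over Ioi 0
  have hIoi : ∫ x in Ioi (0:ℝ), F' x = 0 - (inner ℂ kp gp : ℂ) := by
    set Fp : ℝ → ℂ := fun x => if 0 < x then F x else (inner ℂ kp gp : ℂ) with hFp
    have heq : ∀ x ∈ Ioi (0:ℝ), Fp x = F x := fun x hx => if_pos hx
    have hcont : ContinuousWithinAt Fp (Ici (0:ℝ)) 0 := by
      have hIci : Ici (0:ℝ) = {0} ∪ Ioi 0 := by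
        ext x; simp [le_iff_lt_or_eq, or_comm, eq_comm]
      unfold ContinuousWithinAt
      rw [hIci, nhdsWithin_union, nhdsWithin_singleton]
      have h0 : Fp 0 = (inner ℂ kp gp : ℂ) := if_neg (lt_irrefl 0)
      rw [h0]
      refine Tendsto.sup (by rw [← h0]; exact tendsto_pure_nhds Fp 0) ?_
      have hFlim : Tendsto F (nhdsWithin 0 (Ioi 0)) (nhds (inner ℂ kp gp : ℂ)) :=
        hkp.inner hgp
      exact hFlim.congr' (by filter_upwards [self_mem_nhdsWithin] with x hx
                             exact (heq x hx).symm)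
    have hderiv : ∀ x ∈ Ioi (0:ℝ), HasDerivAt Fp (F' x) x := by
      intro x hx
      refine (hFd x (ne_of_gt hx)).congr_of_eventuallyEq ?_
      filter_upwards [Ioi_mem_nhds hx] with y hy using heq y hy
    have htop : Tendsto Fp atTop (nhds 0) := by
      refine hFtop.congr' ?_
      filter_upwards [Ioi_mem_atTop (0:ℝ)] with x hx using (heq x hx).symm
    have := integral_Ioi_of_hasDerivAt_of_tendsto hcont hderiv hint.integrableOn htop
    rw [this]
    simp [Fp]
  -- integral over Iic 0
  have hIic : ∫ x in Iic (0:ℝ), F' x = (inner ℂ km gm : ℂ) - 0 := by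
    set Fm : ℝ → ℂ := fun x => if x < 0 then F x else (inner ℂ km gm : ℂ) with hFm
    have heq : ∀ x ∈ Iio (0:ℝ), Fm x = F x := fun x hx => if_pos hx
    have hcont : ContinuousWithinAt Fm (Iic (0:ℝ)) 0 := by
      have hIic' : Iic (0:ℝ) = {0} ∪ Iio 0 := by
        ext x; simp [le_iff_lt_or_eq]
      unfold ContinuousWithinAt
      rw [hIic', nhdsWithin_union, nhdsWithin_singleton]
      have h0 : Fm 0 = (inner ℂ km gm : ℂ) := if_neg (lt_irrefl 0)
      rw [h0]
      refine Tendsto.sup (by rw [← h0]; exact tendsto_pure_nhds Fm 0) ?_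
      have hFlim : Tendsto F (nhdsWithin 0 (Iio 0)) (nhds (inner ℂ km gm : ℂ)) :=
        hkm.inner hgm
      exact hFlim.congr' (by filter_upwards [self_mem_nhdsWithin] with x hx
                             exact (heq x hx).symm)
    have hderiv : ∀ x ∈ Iio (0:ℝ), HasDerivAt Fm (F' x) x := by
      intro x hx
      refine (hFd x (ne_of_lt hx)).congr_of_eventuallyEq ?_
      filter_upwards [Iio_mem_nhds hx] with y hy using heq y hy
    have hbot : Tendsto Fm atBot (nhds 0) := by
      refine hFbot.congr' ?_
      filter_upwards [Iio_mem_atBot (0:ℝ)] with x hx using (heq x hx).symm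
    have := integral_Iic_of_hasDerivAt_of_tendsto hcont hderiv hint.integrableOn hbot
    rw [this]
    simp [Fm]
  have htot : ∫ x : ℝ, F' x = (inner ℂ km gm : ℂ) - (inner ℂ kp gp : ℂ) := by
    rw [← intervalIntegral.integral_Iic_add_Ioi (f := F') hint.integrableOn hint.integrableOn, hIic, hIoi]
    ring
  have hsplit : ∫ x : ℝ, F' x
      = (∫ x : ℝ, (inner ℂ (k x) (g' x) : ℂ)) + ∫ x : ℝ, (inner ℂ (k' x) (g x) : ℂ) :=
    integral_add h1 h2
  rw [e1, e2, integral_const_mul, integral_const_mul]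
  have := hsplit.symm.trans htot
  linear_combination (-Complex.I) * this
end

section
/- Let H₀ and H₁ be complex Hilbert spaces, let K := H₀ × H₁ × H₁ be equipped with the product inner product (the sum of the componentwise inner products), and define the linear relation Θ̃ := { ((u, v, v), (0, −w, w)) : u ∈ H₀, v ∈ H₁, w ∈ H₁ } ⊆ K × K. Then the adjoint relation Θ̃* := { (k, k′) ∈ K × K : ⟨h′, k⟩ = ⟨h, k′⟩ for all (h, h′) ∈ Θ̃ } is equal to Θ̃; in other words, the relation Θ̃ is self-adjoint. -/
/-- The linear relation `Θ̃ = {((u,v,v),(0,-w,w))}` in `H₀ × H₁ × H₁` (with the product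
inner product, i.e. the sum of the componentwise inner products) is self-adjoint:
it coincides with its adjoint relation.  The pairing `ip` below is the product inner
product written so as to be linear in its first argument, matching `⟨·,·⟩` of the
paper (`⟨a, b⟩ = inner b a` in Mathlib's convention). -/
theorem stmt_2 (H₀ H₁ : Type*) [NormedAddCommGroup H₀] [InnerProductSpace ℂ H₀]
    [NormedAddCommGroup H₁] [InnerProductSpace ℂ H₁]
    (ip : (H₀ × H₁ × H₁) → (H₀ × H₁ × H₁) → ℂ)
    (hip : ∀ a b : H₀ × H₁ × H₁,
      ip a b = (inner ℂ b.1 a.1 : ℂ) + (inner ℂ b.2.1 a.2.1 : ℂ) + (inner ℂ b.2.2 a.2.2 : ℂ))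
    (Θ : Set ((H₀ × H₁ × H₁) × (H₀ × H₁ × H₁)))
    (hΘ : Θ = {p | ∃ (u : H₀) (v w : H₁), p = ((u, v, v), (0, -w, w))}) :
    {q : (H₀ × H₁ × H₁) × (H₀ × H₁ × H₁) | ∀ p ∈ Θ, ip p.2 q.1 = ip p.1 q.2} = Θ := by
  subst hΘ
  ext q
  obtain ⟨⟨a, b, c⟩, ⟨a', b', c'⟩⟩ := q
  simp only [Set.mem_setOf_eq]
  constructor
  · intro h
    have key : ∀ (u : H₀) (v w : H₁),
        ip ((0 : H₀), -w, w) (a, b, c) = ip (u, v, v) (a', b', c') := by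
      intro u v w
      exact h ((u, v, v), (0, -w, w)) ⟨u, v, w, rfl⟩
    have key' : ∀ (u : H₀) (v w : H₁),
        (inner ℂ c w : ℂ) - inner ℂ b w = inner ℂ a' u + (inner ℂ b' v + inner ℂ c' v) := by
      intro u v w
      have := key u v w
      rw [hip, hip] at this
      simpa [inner_neg_right, sub_eq_add_neg, add_comm, add_left_comm, add_assoc] using this
    have ha' : a' = 0 := by
      have := key' a' 0 0
      simp only [inner_zero_right, sub_self, add_zero] at this
      exact inner_self_eq_zero.mp this.symm
    have hbc' : b' + c' = 0 := by
      have := key' 0 (b' + c') 0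
      simp only [inner_zero_right, sub_self, zero_add, ← inner_add_left] at this
      exact inner_self_eq_zero.mp this.symm
    have hcb : c = b := by
      have := key' 0 0 (c - b)
      simp only [inner_zero_right, add_zero, ← inner_sub_left] at this
      exact sub_eq_zero.mp (inner_self_eq_zero.mp this)
    refine ⟨a, b, c', ?_⟩
    have hb' : b' = -c' := eq_neg_of_add_eq_zero_left hbc'
    rw [hcb, ha', hb']
  · rintro ⟨u, v, w, hq⟩
    simp only [Prod.mk.injEq] at hq
    obtain ⟨⟨rfl, rfl, rfl⟩, rfl, rfl, rfl⟩ := hq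
    rintro p ⟨u₂, v₂, w₂, rfl⟩
    rw [hip, hip]
    simp [inner_neg_right, inner_neg_left]
end

section
/- Let H be a complex Hilbert space and let Θ, M, R be bounded linear operators on H such that Θ* = Θ, R* = R, R ∘ R = (2i)⁻¹(M − M*), and Θ − M is invertible with bounded inverse N. Then the operator U := I + 2i·R ∘ N ∘ R is unitary, i.e. U* ∘ U = I and U ∘ U* = I. -/
open ContinuousLinearMap

/-- Unitarity of the abstract scattering matrix: if `Θ* = Θ`, `R* = R`,
`R² = (2i)⁻¹(M - M*) = Im M`, and `N` is a two-sided inverse of `Θ - M`, then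
`U = I + 2i·R N R` is unitary. -/
theorem stmt_7 (H : Type*) [NormedAddCommGroup H] [InnerProductSpace ℂ H]
    [CompleteSpace H] (Θ M R N : H →L[ℂ] H)
    (hΘ : adjoint Θ = Θ) (hR : adjoint R = R)
    (hRR : R * R = (2 * Complex.I)⁻¹ • (M - adjoint M))
    (hN1 : (Θ - M) * N = 1) (hN2 : N * (Θ - M) = 1) :
    adjoint (1 + (2 * Complex.I) • (R * N * R)) * (1 + (2 * Complex.I) • (R * N * R)) = 1 ∧
    (1 + (2 * Complex.I) • (R * N * R)) * adjoint (1 + (2 * Complex.I) • (R * N * R)) = 1 := by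
  have h0 : (2 * Complex.I) ≠ 0 := by simp [Complex.I_ne_zero]
  have hR' : star R = R := by rwa [star_eq_adjoint]
  have hΘ' : star Θ = Θ := by rwa [star_eq_adjoint]
  have hRR' : R * R = (2 * Complex.I)⁻¹ • (M - star M) := by
    rwa [star_eq_adjoint]
  -- adjoints of the inverse relations
  have h1 : star N * (Θ - star M) = 1 := by
    have := congrArg star hN1
    simpa [star_mul, star_sub, hΘ'] using this
  have h2 : (Θ - star M) * star N = 1 := by
    have := congrArg star hN2
    simpa [star_mul, star_sub, hΘ'] using this
  -- key resolvent identities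
  have key1 : star N * (M - star M) * N = N - star N := by
    have hM : M - star M = (Θ - star M) - (Θ - M) := by abel
    rw [hM, mul_sub, sub_mul, h1, one_mul, mul_assoc, hN1, mul_one]
  have key2 : N * (M - star M) * star N = N - star N := by
    have hM : M - star M = (Θ - star M) - (Θ - M) := by abel
    rw [hM, mul_sub, sub_mul, mul_assoc, h2, mul_one, hN2, one_mul]
  -- adjoint of U
  have hUstar : adjoint (1 + (2 * Complex.I) • (R * N * R))
      = 1 + (-(2 * Complex.I)) • (R * star N * R) := by
    rw [← star_eq_adjoint]
    simp [star_smul, star_mul, hR', Complex.star_def, mul_assoc]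
    ring_nf
  set X := R * N * R with hX
  set Y := R * star N * R with hY
  have hYX : Y * X = (2 * Complex.I)⁻¹ • (X - Y) := by
    calc Y * X = R * star N * (R * R) * N * R := by rw [hX, hY]; noncomm_ring
      _ = R * star N * ((2 * Complex.I)⁻¹ • (M - star M)) * N * R := by rw [hRR']
      _ = (2 * Complex.I)⁻¹ • (R * (star N * (M - star M) * N) * R) := by
          simp only [mul_smul_comm, smul_mul_assoc, mul_assoc]
      _ = (2 * Complex.I)⁻¹ • (X - Y) := by
          rw [key1, hX, hY]; congr 1; noncomm_ring
  have hXY : X * Y = (2 * Complex.I)⁻¹ • (X - Y) := by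
    calc X * Y = R * N * (R * R) * star N * R := by rw [hX, hY]; noncomm_ring
      _ = R * N * ((2 * Complex.I)⁻¹ • (M - star M)) * star N * R := by rw [hRR']
      _ = (2 * Complex.I)⁻¹ • (R * (N * (M - star M) * star N) * R) := by
          simp only [mul_smul_comm, smul_mul_assoc, mul_assoc]
      _ = (2 * Complex.I)⁻¹ • (X - Y) := by
          rw [key2, hX, hY]; congr 1; noncomm_ring
  have hc : (-(2 * Complex.I) * (2 * Complex.I)) * (2 * Complex.I)⁻¹ = -(2 * Complex.I) := by
    rw [neg_mul, neg_mul, mul_assoc, mul_inv_cancel₀ h0, mul_one]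
  constructor
  · rw [hUstar]
    simp only [add_mul, mul_add, one_mul, mul_one, mul_smul_comm, smul_mul_assoc, smul_add,
      smul_smul, hYX]
    match_scalars <;> field_simp <;> ring
  · rw [hUstar]
    simp only [add_mul, mul_add, one_mul, mul_one, mul_smul_comm, smul_mul_assoc, smul_add,
      smul_smul, hXY]
    match_scalars <;> field_simp <;> ring
end

section
/- Let H be a complex Hilbert space and let D, M, R be bounded linear operators on H such that R* = R, R ∘ R = −(2i)⁻¹(D − D*), Im⟨M h, h⟩ ≤ 0 for all h ∈ H, and D* − M is invertible with bounded inverse N. Then the operator W := I − 2i·R ∘ N ∘ R is a contraction, i.e. ‖W x‖ ≤ ‖x‖ for all x ∈ H. -/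
open ContinuousLinearMap

/-- Contractivity of the characteristic function in the lower half-plane: if `R* = R`,
`R² = -(2i)⁻¹(D - D*) = -Im D`, `Im⟨Mh, h⟩ ≤ 0` for all `h` (the paper's inner product
being linear in the first argument, `⟨Mh, h⟩ = inner ℂ h (M h)` in Mathlib's convention),
and `N` is a two-sided inverse of `D* - M`, then `W = I - 2i·R N R` is a contraction. -/
theorem stmt_8 (H : Type*) [NormedAddCommGroup H] [InnerProductSpace ℂ H]
    [CompleteSpace H] (D M R N : H →L[ℂ] H)
    (hR : adjoint R = R)
    (hRR : R * R = -((2 * Complex.I)⁻¹ • (D - adjoint D)))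
    (hM : ∀ h : H, ((inner ℂ h (M h) : ℂ)).im ≤ 0)
    (hN1 : (adjoint D - M) * N = 1) (hN2 : N * (adjoint D - M) = 1) :
    ∀ x : H, ‖(1 - (2 * Complex.I) • (R * N * R)) x‖ ≤ ‖x‖ := by
  intro x
  set y := N (R x) with hy
  have hx : (adjoint D) y - M y = R x := by
    have := congrFun (congrArg DFunLike.coe hN1) (R x)
    simpa [mul_apply, sub_apply] using this
  set z : ℂ := inner ℂ y (D y) with hz
  set m : ℂ := inner ℂ y (M y) with hm
  -- inner ℂ x (R y)
  have hu1 : (inner ℂ x (R y) : ℂ) = starRingEnd ℂ ((starRingEnd ℂ) z - m) := by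
    calc (inner ℂ x (R y) : ℂ) = inner ℂ x ((adjoint R) y) := by rw [hR]
      _ = inner ℂ (R x) y := adjoint_inner_right R x y
      _ = starRingEnd ℂ (inner ℂ y (R x)) := (inner_conj_symm _ _).symm
      _ = starRingEnd ℂ ((starRingEnd ℂ) z - m) := by
          rw [← hx, inner_sub_right]
          congr 1
          rw [hz, ← inner_conj_symm, adjoint_inner_left]
  have him : (inner ℂ x (R y) : ℂ).im = z.im + m.im := by
    rw [hu1]; simp [Complex.sub_im]
  -- norm of R y
  have hu2 : ((‖R y‖ : ℂ))^2 = ((-z.im : ℝ) : ℂ) := by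
    have h1 : ((‖R y‖ : ℂ))^2 = inner ℂ (R y) (R y) := (inner_self_eq_norm_sq_to_K (R y)).symm
    have h2 : (inner ℂ (R y) (R y) : ℂ) = inner ℂ y (R (R y)) := by
      conv_lhs => rw [← hR]
      rw [adjoint_inner_left, hR]
    have h3 : R (R y) = -((2 * Complex.I)⁻¹ • (D y - (adjoint D) y)) := by
      have := congrFun (congrArg DFunLike.coe hRR) y
      simpa [mul_apply, sub_apply] using this
    rw [h1, h2, h3]
    rw [inner_neg_right, inner_smul_right, inner_sub_right]
    have h4 : (inner ℂ y ((adjoint D) y) : ℂ) = starRingEnd ℂ z := by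
      rw [hz, ← inner_conj_symm, adjoint_inner_left]
    rw [h4, ← hz, Complex.sub_conj]
    field_simp
    ring_nf
    push_cast
    ring
  have hre : ‖R y‖^2 = -z.im := by
    have := hu2
    rw [show ((‖R y‖ : ℂ))^2 = ((‖R y‖^2 : ℝ) : ℂ) by push_cast; ring] at this
    exact_mod_cast this
  -- expand the norm
  have happ : (1 - (2 * Complex.I) • (R * N * R)) x = x - (2 * Complex.I) • (R y) := by
    simp [sub_apply, smul_apply, mul_apply, one_apply, hy]
  have hsq : ‖(1 - (2 * Complex.I) • (R * N * R)) x‖^2 = ‖x‖^2 + 4 * m.im := by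
    rw [happ, @norm_sub_sq ℂ, inner_smul_right, norm_smul]
    simp only [RCLike.re_to_complex]
    rw [show (2 * Complex.I * inner ℂ x (R y)).re = -2 * (inner ℂ x (R y) : ℂ).im by
      simp [Complex.mul_re]]
    rw [him]
    rw [show ‖(2 * Complex.I : ℂ)‖ = 2 by simp]
    have h5 : (2 * ‖R y‖)^2 = 4 * ‖R y‖^2 := by ring
    rw [h5, hre]
    ring
  have hfin : ‖(1 - (2 * Complex.I) • (R * N * R)) x‖^2 ≤ ‖x‖^2 := by
    rw [hsq]
    have := hM y
    rw [← hm] at this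
    linarith
  nlinarith [norm_nonneg ((1 - (2 * Complex.I) • (R * N * R)) x), norm_nonneg x]
end

section
/- Let v ∈ ℝ, m > 0, x₀ ∈ ℝ, and let λ ∈ ℂ be such that v − λ ∉ (−∞, 0] (equivalently, λ ∉ [v, ∞)). Set w := (2m(v − λ))^(1/2). Then: (i) Re w > 0; (ii) the function u₀(x) := exp(w·(x − x₀)) satisfies −(1/(2m))·u₀″(x) + v·u₀(x) = λ·u₀(x) for all x ∈ ℝ, and x ↦ |u₀(x)|² is integrable over (−∞, x₀); (iii) if u : ℝ → ℂ is differentiable on (−∞, x₀) with derivative u′, u′ is differentiable on (−∞, x₀) with derivative u″, −(1/(2m))·u″(x) + v·u(x) = λ·u(x) for all x < x₀, and x ↦ |u(x)|² is integrable over (−∞, x₀), then there exists c ∈ ℂ with u(x) = c·exp(w·x) for all x < x₀. -/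
open MeasureTheory

open Set Filter ENNReal

lemma re_sqrt_pos {z : ℂ} (hz : ¬ ∃ r : ℝ, r ≤ 0 ∧ z = (r : ℂ)) :
    0 < (z ^ ((1:ℂ)/2)).re := by
  have hz0 : z ≠ 0 := by rintro rfl; exact hz ⟨0, le_refl 0, by simp⟩
  rw [Complex.cpow_def_of_ne_zero hz0, Complex.exp_re]
  have harg : |z.arg / 2| < Real.pi / 2 := by
    have h1 : -Real.pi < z.arg := Complex.neg_pi_lt_arg z
    have h2 : z.arg ≤ Real.pi := Complex.arg_le_pi z
    have h3 : z.arg ≠ Real.pi := by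
      intro h
      rcases Complex.arg_eq_pi_iff.mp h with ⟨hre, him⟩
      exact hz ⟨z.re, hre.le, by
        exact (Complex.ext (by simp) (by simp [him])).symm⟩
    rw [abs_div, abs_two, div_lt_div_iff₀ (by positivity) (by norm_num)]
    have : |z.arg| < Real.pi := by
      rw [abs_lt]; exact ⟨h1, lt_of_le_of_ne h2 h3⟩
    nlinarith
  have him : (Complex.log z * (1/2)).im = z.arg / 2 := by
    simp [Complex.log_im, Complex.mul_im, Complex.log]
    ring
  have hcos : 0 < Real.cos ((Complex.log z * (1/2)).im) := by
    rw [him]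
    exact Real.cos_pos_of_mem_Ioo ⟨neg_lt_of_abs_lt harg, lt_of_abs_lt harg⟩
  positivity

lemma hasDerivAt_cexp_lin (w b : ℂ) (x : ℝ) :
    HasDerivAt (fun x : ℝ => Complex.exp (w * (x : ℂ) + b))
      (w * Complex.exp (w * (x : ℂ) + b)) x := by
  have h1 : HasDerivAt (fun x : ℝ => w * (x : ℂ) + b) w x := by
    simpa using ((hasDerivAt_id x).ofReal_comp.const_mul w).add_const b
  simpa [mul_comm] using h1.cexp

lemma integrableOn_Iio_comp_neg {f : ℝ → ℝ} {a : ℝ}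
    (h : IntegrableOn (fun x => f (-x)) (Set.Ioi (-a)) volume) :
    IntegrableOn f (Set.Iio a) volume := by
  have h_map : (volume.restrict (Set.Ioi (-a))).map Neg.neg
      = (volume.restrict (Set.Iio a) : Measure ℝ) := by
    conv => rhs; rw [← Measure.map_neg_eq_self (volume : Measure ℝ),
      measurableEmbedding_neg.restrict_map]
    congr 1
    ext x; simp [neg_lt]
  rw [IntegrableOn, ← h_map, measurableEmbedding_neg.integrable_map_iff]
  exact h

lemma integrableOn_exp_mul_Iio {c : ℝ} (hc : 0 < c) (d a : ℝ) :
    IntegrableOn (fun x : ℝ => Real.exp (c * x + d)) (Set.Iio a) volume := by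
  apply integrableOn_Iio_comp_neg
  have := (exp_neg_integrableOn_Ioi (-a) hc).mul_const (Real.exp d)
  refine this.congr (Eventually.of_forall fun x => ?_)
  show Real.exp (-c * x) * Real.exp d = Real.exp (c * -x + d)
  rw [← Real.exp_add]; ring_nf

lemma const_on_Iio {F : ℝ → ℂ} {x₀ : ℝ} (h : ∀ x < x₀, HasDerivAt F 0 x) :
    ∀ x < x₀, ∀ y < x₀, F x = F y := by
  have key : ∀ x y : ℝ, x ≤ y → y < x₀ → F y = F x := by
    intro x y hxy hy
    have hcont : ContinuousOn F (Icc x y) := fun z hz =>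
      ((h z (lt_of_le_of_lt hz.2 hy)).continuousAt).continuousWithinAt
    have hderiv : ∀ z ∈ Ico x y, HasDerivWithinAt F 0 (Ici z) z := fun z hz =>
      (h z (lt_of_lt_of_le hz.2 hy.le)).hasDerivWithinAt
    exact constant_of_has_deriv_right_zero hcont hderiv y ⟨hxy, le_refl y⟩
  intro x hx y hy
  rcases le_total x y with hxy | hxy
  · exact (key x y hxy hy).symm
  · exact key y x hxy hx

lemma not_integrable_of_one_le {f : ℝ → ℝ} {x₀ t : ℝ} (ht : t < x₀)
    (hbig : ∀ x ≤ t, 1 ≤ f x)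
    (hint : IntegrableOn f (Set.Iio x₀) volume) : False := by
  have hfin : ∫⁻ x in Set.Iio x₀, ‖f x‖₊ ∂volume < ⊤ := hint.2
  have h1 : ∫⁻ x in Set.Iic t, (1 : ℝ≥0∞) ∂volume ≤ ∫⁻ x in Set.Iic t, ‖f x‖₊ ∂volume := by
    refine setLIntegral_mono' measurableSet_Iic fun x hx => ?_
    have := hbig x hx
    rw [← ENNReal.coe_one, ENNReal.coe_le_coe, ← NNReal.coe_le_coe]
    simpa [Real.norm_eq_abs, abs_of_nonneg (by linarith : (0:ℝ) ≤ f x)] using this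
  have h2 : ∫⁻ x in Set.Iic t, ‖f x‖₊ ∂volume ≤ ∫⁻ x in Set.Iio x₀, ‖f x‖₊ ∂volume :=
    lintegral_mono_set (fun x hx => lt_of_le_of_lt hx ht)
  rw [setLIntegral_one, Real.volume_Iic] at h1
  exact absurd (lt_of_le_of_lt (le_trans h1 h2) hfin) (by simp)


lemma hasDerivAt_cexp_mul (w : ℂ) (x : ℝ) :
    HasDerivAt (fun x : ℝ => Complex.exp (w * (x : ℂ))) (w * Complex.exp (w * (x : ℂ))) x := by
  simpa using hasDerivAt_cexp_lin w 0 x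


/-- For `λ ∉ [v, ∞)` and `w = (2m(v - λ))^{1/2}` (principal branch): (i) `Re w > 0`;
(ii) `u₀(x) = exp(w(x - x₀))` solves `-(1/(2m))u₀'' + v·u₀ = λ·u₀` and `|u₀|²` is
integrable on `(-∞, x₀)`; (iii) every square-integrable solution on `(-∞, x₀)` is a
scalar multiple of `x ↦ exp(w·x)` there. -/
theorem stmt_12 (v m x₀ : ℝ) (hm : 0 < m) (lam : ℂ)
    (hlam : ¬ ∃ r : ℝ, r ≤ 0 ∧ (v : ℂ) - lam = (r : ℂ))
    (w : ℂ) (hw : w = (2 * (m : ℂ) * ((v : ℂ) - lam)) ^ ((1 : ℂ) / 2))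
    (u₀ : ℝ → ℂ) (hu₀ : ∀ x : ℝ, u₀ x = Complex.exp (w * ((x : ℂ) - (x₀ : ℂ)))) :
    0 < w.re ∧
    (∀ x : ℝ,
      -(1 / (2 * (m : ℂ))) * deriv (deriv u₀) x + (v : ℂ) * u₀ x = lam * u₀ x) ∧
    IntegrableOn (fun x : ℝ => ‖u₀ x‖ ^ 2) (Set.Iio x₀) volume ∧
    (∀ u u' u'' : ℝ → ℂ,
      (∀ x : ℝ, x < x₀ → HasDerivAt u (u' x) x) →
      (∀ x : ℝ, x < x₀ → HasDerivAt u' (u'' x) x) →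
      (∀ x : ℝ, x < x₀ →
        -(1 / (2 * (m : ℂ))) * u'' x + (v : ℂ) * u x = lam * u x) →
      IntegrableOn (fun x : ℝ => ‖u x‖ ^ 2) (Set.Iio x₀) volume →
      ∃ c : ℂ, ∀ x : ℝ, x < x₀ → u x = c * Complex.exp (w * (x : ℂ))) := by
  have hm0 : (m : ℂ) ≠ 0 := by exact_mod_cast hm.ne'
  have h2m : (2 * (m : ℂ)) ≠ 0 := mul_ne_zero two_ne_zero hm0
  have hz : ¬ ∃ r : ℝ, r ≤ 0 ∧ (2 * (m : ℂ) * ((v : ℂ) - lam)) = (r : ℂ) := by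
    rintro ⟨r, hr, hr2⟩
    refine hlam ⟨r / (2 * m), div_nonpos_of_nonpos_of_nonneg hr (by linarith), ?_⟩
    push_cast
    rw [_root_.eq_div_iff h2m]
    linear_combination hr2
  have hre : 0 < w.re := by rw [hw]; exact re_sqrt_pos hz
  have hw2 : w ^ 2 = 2 * (m : ℂ) * ((v : ℂ) - lam) := by
    rw [hw, show ((1:ℂ)/2) = (((2:ℕ)):ℂ)⁻¹ by norm_num]
    exact Complex.cpow_nat_inv_pow _ two_ne_zero
  have hwne : w ≠ 0 := fun h => by simp [h] at hre
  -- (ii) derivative facts for u₀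
  have hu₀fun : u₀ = fun x : ℝ => Complex.exp (w * (x : ℂ) + -(w * (x₀ : ℂ))) := by
    funext x; rw [hu₀]; congr 1; ring
  have hder : ∀ x : ℝ, HasDerivAt u₀ (w * u₀ x) x := by
    intro x
    rw [hu₀fun]
    exact hasDerivAt_cexp_lin w (-(w * (x₀:ℂ))) x
  have hd1 : deriv u₀ = fun x => w * u₀ x := funext fun x => (hder x).deriv
  have hd2 : ∀ x : ℝ, deriv (deriv u₀) x = w * (w * u₀ x) := by
    intro x; rw [hd1]; exact ((hder x).const_mul w).deriv
  refine ⟨hre, ?_, ?_, ?_⟩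
  · intro x
    rw [hd2 x]
    field_simp
    linear_combination (-(u₀ x)) * hw2
  · have heq : (fun x : ℝ => ‖u₀ x‖ ^ 2)
        = fun x => Real.exp (2 * w.re * x + -(2 * w.re * x₀)) := by
      funext x
      rw [hu₀, Complex.norm_exp, pow_two, ← Real.exp_add]
      congr 1
      simp [Complex.mul_re]
      ring
    rw [heq]
    exact integrableOn_exp_mul_Iio (by positivity) _ _
  · intro u u' u'' hu hu' hode hint
    have hu'' : ∀ x, x < x₀ → u'' x = w ^ 2 * u x := by
      intro x hx
      have h := hode x hx
      rw [hw2]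
      field_simp at h
      linear_combination -h
    have hx₁ : x₀ - 1 < x₀ := by linarith
    have hP : ∀ x < x₀, HasDerivAt
        (fun x : ℝ => (u' x - w * u x) * Complex.exp (w * (x:ℂ))) 0 x := by
      intro x hx
      have h := ((hu' x hx).sub ((hu x hx).const_mul w)).mul (hasDerivAt_cexp_mul w x)
      exact h.congr_deriv (by rw [hu'' x hx]; simp only [Pi.sub_apply]; ring)
    have hQ : ∀ x < x₀, HasDerivAt
        (fun x : ℝ => (u' x + w * u x) * Complex.exp (-(w * (x:ℂ)))) 0 x := by
      intro x hx
      have hexpd : HasDerivAt (fun x : ℝ => Complex.exp (-(w * (x:ℂ))))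
          (-w * Complex.exp (-(w * (x:ℂ)))) x := by
        simpa [neg_mul] using hasDerivAt_cexp_mul (-w) x
      have h := ((hu' x hx).add ((hu x hx).const_mul w)).mul hexpd
      exact h.congr_deriv (by rw [hu'' x hx]; simp only [Pi.add_apply]; ring)
    obtain ⟨A, hA⟩ : ∃ A : ℂ, ∀ x < x₀,
        (u' x - w * u x) * Complex.exp (w * (x:ℂ)) = A :=
      ⟨_, fun x hx => const_on_Iio hP x hx (x₀ - 1) hx₁⟩
    obtain ⟨B, hB⟩ : ∃ B : ℂ, ∀ x < x₀,
        (u' x + w * u x) * Complex.exp (-(w * (x:ℂ))) = B :=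
      ⟨_, fun x hx => const_on_Iio hQ x hx (x₀ - 1) hx₁⟩
    have hexp1 : ∀ x : ℝ, Complex.exp (w * (x:ℂ)) * Complex.exp (-(w * (x:ℂ))) = 1 := by
      intro x; rw [← Complex.exp_add]; simp
    have hux : ∀ x < x₀, 2 * w * u x
        = B * Complex.exp (w * (x:ℂ)) - A * Complex.exp (-(w * (x:ℂ))) := by
      intro x hx
      have h1 := hA x hx
      have h2 := hB x hx
      linear_combination Complex.exp (w * (x:ℂ)) * h2 - Complex.exp (-(w * (x:ℂ))) * h1
        - 2 * w * u x * hexp1 x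
    have hA0 : A = 0 := by
      by_contra hA0
      have habsA : 0 < ‖A‖ := norm_pos_iff.mpr hA0
      have habsw : 0 < ‖w‖ := norm_pos_iff.mpr hwne
      have habs : ∀ x < x₀,
          (‖A‖ * Real.exp (-(w.re * x)) - ‖B‖ * Real.exp (w.re * x))
            / (2 * ‖w‖) ≤ ‖u x‖ := by
        intro x hx
        have e1 : ‖B * Complex.exp (w * (x:ℂ))‖
            = ‖B‖ * Real.exp (w.re * x) := by
          simp [norm_mul, Complex.norm_exp, Complex.mul_re]
        have e2 : ‖A * Complex.exp (-(w * (x:ℂ)))‖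
            = ‖A‖ * Real.exp (-(w.re * x)) := by
          simp [norm_mul, Complex.norm_exp, Complex.mul_re]
        have e3 : ‖2 * w * u x‖ = 2 * ‖w‖ * ‖u x‖ := by
          simp [norm_mul]
        have h4 := norm_sub_norm_le (A * Complex.exp (-(w * (x:ℂ))))
          (B * Complex.exp (w * (x:ℂ)))
        rw [norm_sub_rev] at h4
        rw [div_le_iff₀ (by positivity)]
        have h5 : ‖B * Complex.exp (w * (x:ℂ)) - A * Complex.exp (-(w * (x:ℂ)))‖
            = ‖2 * w * u x‖ := by
          rw [hux x hx]
        rw [h5, e3] at h4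
        rw [e1, e2] at h4
        linarith
      have t1 : Tendsto (fun x : ℝ => ‖A‖ * Real.exp (-(w.re * x))) atBot atTop := by
        apply Tendsto.const_mul_atTop habsA
        apply Real.tendsto_exp_atTop.comp
        simpa [mul_neg] using tendsto_neg_atBot_atTop.const_mul_atTop hre
      have t2 : Tendsto (fun x : ℝ => ‖B‖ * Real.exp (w.re * x)) atBot (nhds 0) := by
        have h := Real.tendsto_exp_atBot.comp (tendsto_id.const_mul_atBot hre)
        simpa using h.const_mul (‖B‖)
      have t3 : Tendsto (fun x : ℝ =>
          (‖A‖ * Real.exp (-(w.re * x)) - ‖B‖ * Real.exp (w.re * x))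
            / (2 * ‖w‖)) atBot atTop := by
        apply Tendsto.atTop_div_const (by positivity)
        simpa [sub_eq_add_neg] using t1.atTop_add t2.neg
      have hev := (t3.eventually_ge_atTop 1).and (eventually_lt_atBot x₀)
      rw [eventually_atBot] at hev
      obtain ⟨t, ht⟩ := hev
      refine not_integrable_of_one_le (ht t le_rfl).2 (fun x hx => ?_) hint
      obtain ⟨h1x, h2x⟩ := ht x hx
      have := habs x h2x
      nlinarith [norm_nonneg (u x)]
    refine ⟨B / (2 * w), fun x hx => ?_⟩
    have h := hux x hx
    rw [hA0] at h
    field_simp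
    linear_combination h
end

section
/- Let λ ∈ ℂ with λ ∉ [0, ∞), and set w := (−λ)^(1/2), so that Re w > 0. If f : ℝ → ℂ is continuous on ℝ, is differentiable at every x ≠ 0 with derivative f′, f′ is differentiable at every x ≠ 0 with derivative f″, −f″(x) = λ·f(x) for all x ≠ 0, and x ↦ |f(x)|² is integrable over ℝ, then f(x) = f(0)·exp(−w·|x|) for all x ∈ ℝ. -/
open MeasureTheory

private lemma hexp_aux (c : ℂ) (x : ℝ) :
    HasDerivAt (fun t : ℝ => Complex.exp (c * t)) (c * Complex.exp (c * x)) x := by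
  have h : HasDerivAt (fun z : ℂ => Complex.exp (c * z)) (c * Complex.exp (c * x)) (x : ℂ) := by
    simpa [mul_comm] using ((hasDerivAt_id ((x : ℝ) : ℂ)).const_mul c).cexp
  exact h.comp_ofReal

private lemma const_aux {g : ℝ → ℂ} (hg : ∀ x ∈ Set.Ioi (0:ℝ), HasDerivAt g 0 x)
    {x y : ℝ} (hx : x ∈ Set.Ioi (0:ℝ)) (hy : y ∈ Set.Ioi (0:ℝ)) : g x = g y := by
  refine (convex_Ioi (0:ℝ)).is_const_of_fderivWithin_eq_zero
    (fun z hz => ((hg z hz).differentiableAt).differentiableWithinAt) ?_ hx hy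
  intro z hz
  rw [fderivWithin_of_isOpen isOpen_Ioi hz]
  rw [(hg z hz).hasFDerivAt.fderiv]
  ext
  simp

private lemma half_aux (lam : ℂ) (w : ℂ) (hw2 : w * w = -lam) (hre : 0 < w.re)
    (f f' f'' : ℝ → ℂ) (hcont : Continuous f)
    (hf : ∀ x : ℝ, x ≠ 0 → HasDerivAt f (f' x) x)
    (hf' : ∀ x : ℝ, x ≠ 0 → HasDerivAt f' (f'' x) x)
    (hode : ∀ x : ℝ, x ≠ 0 → -f'' x = lam * f x)
    (hint : Integrable (fun x : ℝ => ‖f x‖ ^ 2) volume) :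
    ∀ x : ℝ, 0 < x → f x = f 0 * Complex.exp (-w * x) := by
  have hwne : w ≠ 0 := fun h => by simp [h] at hre
  have hode' : ∀ x : ℝ, x ≠ 0 → f'' x = w * w * f x := by
    intro x hx
    have := hode x hx
    rw [hw2]
    linear_combination -this
  -- Step 1: h := (f' + w f) e^{-wx} is constant on Ioi 0
  set C : ℂ := (f' 1 + w * f 1) * Complex.exp (-w * (1:ℝ)) with hC
  have hstep1 : ∀ x ∈ Set.Ioi (0:ℝ), f' x + w * f x = C * Complex.exp (w * x) := by
    have hconst : ∀ x ∈ Set.Ioi (0:ℝ),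
        (f' x + w * f x) * Complex.exp (-w * x) = C := by
      intro x hx
      refine const_aux (g := fun x => (f' x + w * f x) * Complex.exp (-w * x)) ?_ hx
        (Set.mem_Ioi.2 one_pos)
      intro z hz
      have hz0 : z ≠ 0 := ne_of_gt hz
      have hd : HasDerivAt (fun x => (f' x + w * f x) * Complex.exp (-w * x))
          ((f'' z + w * f' z) * Complex.exp (-w * z)
            + (f' z + w * f z) * (-w * Complex.exp (-w * z))) z :=
        (((hf' z hz0).add ((hf z hz0).const_mul w)).mul (hexp_aux (-w) z))
      convert hd using 1
      rw [hode' z hz0]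
      ring
    intro x hx
    have h1 := hconst x hx
    have he : Complex.exp (-w * x) * Complex.exp (w * x) = 1 := by
      rw [← Complex.exp_add]; ring_nf; exact Complex.exp_zero
    calc f' x + w * f x = (f' x + w * f x) * (Complex.exp (-w * x) * Complex.exp (w * x)) := by
          rw [he, mul_one]
      _ = C * Complex.exp (w * x) := by rw [← mul_assoc, h1]
  -- Step 2: k := f e^{wx} - E e^{2wx} is constant, E = C/(2w)
  set E : ℂ := C / (2 * w) with hE
  set D : ℂ := f 1 * Complex.exp (w * (1:ℝ)) - E * Complex.exp (2 * w * (1:ℝ)) with hD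
  have hstep2 : ∀ x ∈ Set.Ioi (0:ℝ), f x = D * Complex.exp (-w * x) + E * Complex.exp (w * x) := by
    have hconst : ∀ x ∈ Set.Ioi (0:ℝ),
        f x * Complex.exp (w * x) - E * Complex.exp (2 * w * x) = D := by
      intro x hx
      refine const_aux (g := fun x => f x * Complex.exp (w * x) - E * Complex.exp (2 * w * x)) ?_
        hx (Set.mem_Ioi.2 one_pos)
      intro z hz
      have hz0 : z ≠ 0 := ne_of_gt hz
      have hd : HasDerivAt (fun x => f x * Complex.exp (w * x) - E * Complex.exp (2 * w * x))
          ((f' z * Complex.exp (w * z) + f z * (w * Complex.exp (w * z)))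
            - E * (2 * w * Complex.exp (2 * w * z))) z :=
        (((hf z hz0).mul (hexp_aux w z)).sub ((hexp_aux (2 * w) z).const_mul E))
      convert hd using 1
      have h1 := hstep1 z hz
      have he2 : Complex.exp (2 * w * z) = Complex.exp (w * z) * Complex.exp (w * z) := by
        rw [← Complex.exp_add]; ring_nf
      have hEw : E * (2 * w) = C := by
        rw [hE]; field_simp
      rw [he2]
      linear_combination (-(Complex.exp (w * z)) : ℂ) * h1
        + Complex.exp (w * z) * Complex.exp (w * z) * hEw
    intro x hx
    have h1 := hconst x hx
    have he : Complex.exp (w * x) ≠ 0 := Complex.exp_ne_zero _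
    have he2 : Complex.exp (2 * w * x) = Complex.exp (w * x) * Complex.exp (w * x) := by
      rw [← Complex.exp_add]; ring_nf
    have hinv : Complex.exp (-w * x) * Complex.exp (w * x) = 1 := by
      rw [← Complex.exp_add]; ring_nf; exact Complex.exp_zero
    have : f x * Complex.exp (w * x) = D + E * (Complex.exp (w * x) * Complex.exp (w * x)) := by
      rw [← he2]; linear_combination h1
    calc f x = f x * (Complex.exp (-w * x) * Complex.exp (w * x)) := by rw [hinv, mul_one]
      _ = (f x * Complex.exp (w * x)) * Complex.exp (-w * x) := by ring
      _ = (D + E * (Complex.exp (w * x) * Complex.exp (w * x))) * Complex.exp (-w * x) := by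
          rw [this]
      _ = D * Complex.exp (-w * x)
          + E * (Complex.exp (-w * x) * Complex.exp (w * x)) * Complex.exp (w * x) := by ring
      _ = D * Complex.exp (-w * x) + E * Complex.exp (w * x) := by rw [hinv]; ring
  -- Step 3: E = 0 by integrability
  have hEzero : E = 0 := by
    by_contra hEne
    set r : ℝ := w.re with hr
    have habs : ∀ c : ℂ, ∀ x : ℝ, ‖Complex.exp (c * x)‖ = Real.exp (c.re * x) := by
      intro c x
      rw [Complex.norm_exp]
      congr 1
      simp [Complex.mul_re]
    have hlow : ∀ x : ℝ, 0 < x →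
        ‖E‖ * Real.exp (r * x) - ‖D‖ ≤ ‖f x‖ := by
      intro x hx
      have h1 := hstep2 x hx
      have h2 : ‖E * Complex.exp (w * x)‖ ≤
          ‖f x‖ + ‖D * Complex.exp (-w * x)‖ := by
        calc ‖E * Complex.exp (w * x)‖
            = ‖f x - D * Complex.exp (-w * x)‖ := by rw [h1]; ring_nf
          _ ≤ ‖f x‖ + ‖D * Complex.exp (-w * x)‖ :=
            (norm_sub_le _ _)
      have h3 : ‖D * Complex.exp (-w * x)‖ ≤ ‖D‖ := by
        rw [norm_mul, habs]
        have : Real.exp ((-w).re * x) ≤ 1 := by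
          rw [Real.exp_le_one_iff]
          simp only [Complex.neg_re]
          nlinarith
        nlinarith [norm_nonneg D, Real.exp_pos ((-w).re * x)]
      have h4 : ‖E * Complex.exp (w * x)‖ = ‖E‖ * Real.exp (r * x) := by
        rw [norm_mul, habs]
      nlinarith
    have htends : Filter.Tendsto (fun x : ℝ => ‖E‖ * Real.exp (r * x) - ‖D‖)
        Filter.atTop Filter.atTop := by
      have hEpos : 0 < ‖E‖ := norm_pos_iff.mpr hEne
      have : Filter.Tendsto (fun x : ℝ => Real.exp (r * x)) Filter.atTop Filter.atTop :=
        Real.tendsto_exp_atTop.comp (Filter.Tendsto.const_mul_atTop hre Filter.tendsto_id)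
      exact (this.const_mul_atTop hEpos).atTop_add tendsto_const_nhds
    have hev : ∀ᶠ x : ℝ in Filter.atTop,
        1 ≤ ‖E‖ * Real.exp (r * x) - ‖D‖ := htends.eventually_ge_atTop 1
    obtain ⟨N, hN⟩ := (hev.and (Filter.eventually_gt_atTop 0)).exists_forall_of_atTop
    have hone : Integrable (fun _ : ℝ => (1:ℝ)) (volume.restrict (Set.Ici N)) := by
      refine (hint.restrict (s := Set.Ici N)).mono aestronglyMeasurable_const ?_
      rw [ae_restrict_iff' measurableSet_Ici]
      refine Filter.Eventually.of_forall fun x hx => ?_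
      have hx0 : 0 < x := lt_of_lt_of_le (hN N le_rfl).2 hx
      have h1 : 1 ≤ ‖f x‖ :=
        le_trans (hN x hx).1 (hlow x hx0)
      have h2 : 1 ≤ ‖f x‖ ^ 2 := by nlinarith
      simp only [norm_one, Real.norm_eq_abs]
      rw [abs_of_nonneg (by positivity)]
      exact h2
    rw [integrable_const_iff] at hone
    rcases hone with h | h
    · norm_num at h
    · have h' := measure_lt_top (volume.restrict (Set.Ici N)) Set.univ
      rw [Measure.restrict_apply_univ, Real.volume_Ici] at h'
      exact (lt_irrefl _ h').elim
  -- Step 4: conclude via continuity at 0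
  have hform : ∀ x : ℝ, 0 < x → f x = D * Complex.exp (-w * x) := by
    intro x hx
    rw [hstep2 x hx, hEzero]
    ring
  have hD0 : D = f 0 := by
    have t1 : Filter.Tendsto f (nhdsWithin 0 (Set.Ioi 0)) (nhds (f 0)) :=
      (hcont.tendsto 0).mono_left nhdsWithin_le_nhds
    have t2 : Filter.Tendsto (fun x : ℝ => D * Complex.exp (-w * x))
        (nhdsWithin 0 (Set.Ioi 0)) (nhds (D * Complex.exp (-w * (0:ℝ)))) :=
      ((continuous_const.mul ((Complex.continuous_exp.comp
        (continuous_const.mul Complex.continuous_ofReal)))).tendsto 0).mono_left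
        nhdsWithin_le_nhds
    have t2' : Filter.Tendsto f (nhdsWithin 0 (Set.Ioi 0)) (nhds (D * Complex.exp (-w * (0:ℝ)))) := by
      refine t2.congr' ?_
      filter_upwards [self_mem_nhdsWithin] with x hx
      exact (hform x hx).symm
    have := tendsto_nhds_unique t2' t1
    simpa using this
  intro x hx
  rw [hform x hx, hD0]

/-- The defect subspace of `A = -d²/dx²` on `{f ∈ W²₂(ℝ) : f(0) = 0}`: for
`λ ∉ [0, ∞)` and `w = (-λ)^{1/2}` (principal branch, so `Re w > 0`), every continuous
square-integrable solution of `-f'' = λ f` away from `0` is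
`f(x) = f(0)·exp(-w·|x|)`. -/
theorem stmt_13 (lam : ℂ) (hlam : ¬ ∃ r : ℝ, 0 ≤ r ∧ lam = (r : ℂ))
    (w : ℂ) (hw : w = (-lam) ^ ((1 : ℂ) / 2))
    (f f' f'' : ℝ → ℂ) (hcont : Continuous f)
    (hf : ∀ x : ℝ, x ≠ 0 → HasDerivAt f (f' x) x)
    (hf' : ∀ x : ℝ, x ≠ 0 → HasDerivAt f' (f'' x) x)
    (hode : ∀ x : ℝ, x ≠ 0 → -f'' x = lam * f x)
    (hint : Integrable (fun x : ℝ => ‖f x‖ ^ 2) volume) :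
    0 < w.re ∧ ∀ x : ℝ, f x = f 0 * Complex.exp (-w * ((|x| : ℝ) : ℂ)) := by
  have hlamne : lam ≠ 0 := by
    intro h
    exact hlam ⟨0, le_rfl, by simp [h]⟩
  have hne : (-lam) ≠ 0 := neg_ne_zero.2 hlamne
  have hargpi : Complex.arg (-lam) ≠ Real.pi := by
    intro h
    rw [Complex.arg_eq_pi_iff] at h
    obtain ⟨h1, h2⟩ := h
    refine hlam ⟨lam.re, ?_, ?_⟩
    · simp only [Complex.neg_re] at h1; linarith
    · have him : lam.im = 0 := by simpa using h2
      exact Complex.ext (by simp) (by simp [him])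
  have hre : 0 < w.re := by
    rw [hw, Complex.cpow_def_of_ne_zero hne, Complex.exp_re]
    have harg : (Complex.log (-lam) * ((1:ℂ)/2)).im = Complex.arg (-lam) / 2 := by
      simp [Complex.log_im, Complex.mul_im, Complex.log_re]
      ring
    rw [harg]
    have h1 : -Real.pi < Complex.arg (-lam) := Complex.neg_pi_lt_arg _
    have h2 : Complex.arg (-lam) < Real.pi :=
      lt_of_le_of_ne (Complex.arg_le_pi _) hargpi
    have hcos : 0 < Real.cos (Complex.arg (-lam) / 2) :=
      Real.cos_pos_of_mem_Ioo ⟨by linarith, by linarith⟩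
    positivity
  have hw2 : w * w = -lam := by
    rw [hw, ← Complex.cpow_add _ _ hne]
    norm_num
  refine ⟨hre, ?_⟩
  have hpos := half_aux lam w hw2 hre f f' f'' hcont hf hf' hode hint
  -- the reflected function
  set g : ℝ → ℂ := fun x => f (-x) with hg
  have hgpos : ∀ x : ℝ, 0 < x → g x = g 0 * Complex.exp (-w * x) := by
    refine half_aux lam w hw2 hre g (fun x => -f' (-x)) (fun x => f'' (-x))
      (hcont.comp continuous_neg) ?_ ?_ ?_ ?_
    · intro x hx
      have h := (hf (-x) (neg_ne_zero.2 hx)).scomp x (hasDerivAt_neg x)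
      simpa [Function.comp_def] using h
    · intro x hx
      have h := (hf' (-x) (neg_ne_zero.2 hx)).scomp x (hasDerivAt_neg x)
      have : HasDerivAt (fun y : ℝ => -f' (-y)) (-((-1 : ℝ) • f'' (-x))) x := by
        simpa [Function.comp_def, Pi.neg_def] using h.neg
      simpa using this
    · intro x hx
      exact hode (-x) (neg_ne_zero.2 hx)
    · have hmp : MeasurePreserving (fun x : ℝ => -x) volume volume :=
        Measure.measurePreserving_neg volume
      have hemb : MeasurableEmbedding (fun x : ℝ => -x) :=
        (Homeomorph.neg ℝ).measurableEmbedding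
      exact (hmp.integrable_comp_emb hemb).2 hint
  intro x
  rcases lt_trichotomy x 0 with hx | hx | hx
  · have h := hgpos (-x) (by linarith)
    rw [hg] at h
    simp only [neg_neg, neg_zero] at h
    rw [abs_of_neg hx]
    exact h
  · simp [hx]
  · rw [hpos x hx]
    rw [abs_of_pos hx]
end

section
/- Let f, g : ℝ → ℂ be continuous functions that are twice differentiable at every x ≠ 0 (with first derivatives f′, g′ and second derivatives f″, g″), such that f, f′, f″, g, g′, g″ are square-integrable on ℝ, the one-sided limits f′(0+), f′(0−), g′(0+), g′(0−) exist, and f(x), f′(x), g(x), g′(x) → 0 as x → ±∞. Then ∫_ℝ (−f″(x))·conj(g(x)) dx − ∫_ℝ f(x)·conj(−g″(x)) dx = (f′(0+) − f′(0−))·conj(g(0)) − f(0)·conj(g′(0+) − g′(0−)). -/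
open MeasureTheory Filter Set
open scoped ENNReal

private lemma l2_mul_integrable (φ h : ℝ → ℂ) (hφ : MemLp φ 2 (volume : Measure ℝ))
    (hh : MemLp h 2 (volume : Measure ℝ)) :
    Integrable (fun x => φ x * h x) (volume : Measure ℝ) :=
  memLp_one_iff_integrable.mp
    (hh.smul (q := 2) (p := 2) (r := 1) hφ)

private lemma conj_memL2 (g : ℝ → ℂ) (hg : MemLp g 2 (volume : Measure ℝ)) :
    MemLp (fun x => (starRingEnd ℂ) (g x)) 2 (volume : Measure ℝ) := by
  refine hg.of_le (Complex.continuous_conj.comp_aestronglyMeasurable hg.1) ?_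
  filter_upwards with x; simp


/-- Green identity for `-d²/dx²` on `ℝ \ {0}`: for continuous `f, g` with square
integrable derivatives up to order two away from `0`, one-sided limits of `f', g'`
at `0`, and decay of `f, f', g, g'` at `±∞`,
`∫ (-f'')·conj g - ∫ f·conj(-g'') = (f'(0+) - f'(0-))·conj(g 0) - f 0·conj(g'(0+) - g'(0-))`. -/
theorem stmt_18 (f g f' g' f'' g'' : ℝ → ℂ)
    (hfc : Continuous f) (hgc : Continuous g)
    (hf : ∀ x : ℝ, x ≠ 0 → HasDerivAt f (f' x) x)
    (hf' : ∀ x : ℝ, x ≠ 0 → HasDerivAt f' (f'' x) x)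
    (hg : ∀ x : ℝ, x ≠ 0 → HasDerivAt g (g' x) x)
    (hg' : ∀ x : ℝ, x ≠ 0 → HasDerivAt g' (g'' x) x)
    (hfL2 : MemLp f 2 (volume : Measure ℝ))
    (hf'L2 : MemLp f' 2 (volume : Measure ℝ))
    (hf''L2 : MemLp f'' 2 (volume : Measure ℝ))
    (hgL2 : MemLp g 2 (volume : Measure ℝ))
    (hg'L2 : MemLp g' 2 (volume : Measure ℝ))
    (hg''L2 : MemLp g'' 2 (volume : Measure ℝ))
    (fp fm gp gm : ℂ)
    (hfp : Tendsto f' (nhdsWithin 0 (Ioi 0)) (nhds fp))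
    (hfm : Tendsto f' (nhdsWithin 0 (Iio 0)) (nhds fm))
    (hgp : Tendsto g' (nhdsWithin 0 (Ioi 0)) (nhds gp))
    (hgm : Tendsto g' (nhdsWithin 0 (Iio 0)) (nhds gm))
    (hftop : Tendsto f atTop (nhds 0)) (hfbot : Tendsto f atBot (nhds 0))
    (hf'top : Tendsto f' atTop (nhds 0)) (hf'bot : Tendsto f' atBot (nhds 0))
    (hgtop : Tendsto g atTop (nhds 0)) (hgbot : Tendsto g atBot (nhds 0))
    (hg'top : Tendsto g' atTop (nhds 0)) (hg'bot : Tendsto g' atBot (nhds 0)) :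
    (∫ x : ℝ, (-f'' x) * (starRingEnd ℂ) (g x)) -
      (∫ x : ℝ, f x * (starRingEnd ℂ) (-g'' x)) =
    (fp - fm) * (starRingEnd ℂ) (g 0) - f 0 * (starRingEnd ℂ) (gp - gm) := by
  set c : ℂ →+* ℂ := starRingEnd ℂ with hc
  -- the "Wronskian"
  set W : ℝ → ℂ := fun x => f' x * c (g x) - f x * c (g' x) with hW
  set D : ℝ → ℂ := fun x => f'' x * c (g x) - f x * c (g'' x) with hD
  set Wp : ℝ → ℂ := fun x => if x = 0 then fp * c (g 0) - f 0 * c gp else W x with hWp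
  set Wm : ℝ → ℂ := fun x => if x = 0 then fm * c (g 0) - f 0 * c gm else W x with hWm
  -- integrability
  have hint1 : Integrable (fun x => f'' x * c (g x)) (volume : Measure ℝ) :=
    l2_mul_integrable _ _ hf''L2 (conj_memL2 g hgL2)
  have hint2 : Integrable (fun x => f x * c (g'' x)) (volume : Measure ℝ) :=
    l2_mul_integrable _ _ hfL2 (conj_memL2 g'' hg''L2)
  have hDint : Integrable D (volume : Measure ℝ) := hint1.sub hint2
  -- derivative of W away from 0
  have hWderiv : ∀ x : ℝ, x ≠ 0 → HasDerivAt W (D x) x := by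
    intro x hx
    have h1 : HasDerivAt (fun y => c (g y)) (c (g' x)) x := by
      simpa only [hc, starRingEnd_apply] using (hg x hx).star
    have h2 : HasDerivAt (fun y => c (g' y)) (c (g'' x)) x := by
      simpa only [hc, starRingEnd_apply] using (hg' x hx).star
    have := (((hf' x hx).mul h1).sub ((hf x hx).mul h2))
    convert this using 1
    · rfl
    · rfl
    · simp only [hD]; ring
  -- Wp agrees with W near any nonzero point, along Ioi 0 at 0, and at infinity
  have hWpW : ∀ x : ℝ, x ≠ 0 → Wp x = W x := fun x hx => if_neg hx
  have hWmW : ∀ x : ℝ, x ≠ 0 → Wm x = W x := fun x hx => if_neg hx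
  -- limits of W
  have hconjg0 : Tendsto (fun x => c (g x)) (nhdsWithin 0 (Ioi 0)) (nhds (c (g 0))) :=
    ((Complex.continuous_conj.comp hgc).tendsto 0).mono_left nhdsWithin_le_nhds
  have hconjg0' : Tendsto (fun x => c (g x)) (nhdsWithin 0 (Iio 0)) (nhds (c (g 0))) :=
    ((Complex.continuous_conj.comp hgc).tendsto 0).mono_left nhdsWithin_le_nhds
  have hf0p : Tendsto f (nhdsWithin 0 (Ioi 0)) (nhds (f 0)) :=
    (hfc.tendsto 0).mono_left nhdsWithin_le_nhds
  have hf0m : Tendsto f (nhdsWithin 0 (Iio 0)) (nhds (f 0)) :=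
    (hfc.tendsto 0).mono_left nhdsWithin_le_nhds
  have hcgp : Tendsto (fun x => c (g' x)) (nhdsWithin 0 (Ioi 0)) (nhds (c gp)) :=
    (Complex.continuous_conj.tendsto gp).comp hgp
  have hcgm : Tendsto (fun x => c (g' x)) (nhdsWithin 0 (Iio 0)) (nhds (c gm)) :=
    (Complex.continuous_conj.tendsto gm).comp hgm
  have hWlimp : Tendsto W (nhdsWithin 0 (Ioi 0)) (nhds (fp * c (g 0) - f 0 * c gp)) :=
    (hfp.mul hconjg0).sub (hf0p.mul hcgp)
  have hWlimm : Tendsto W (nhdsWithin 0 (Iio 0)) (nhds (fm * c (g 0) - f 0 * c gm)) :=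
    (hfm.mul hconjg0').sub (hf0m.mul hcgm)
  have hconjgtop : Tendsto (fun x => c (g x)) atTop (nhds 0) := by
    have := (Complex.continuous_conj.tendsto 0).comp hgtop
    simpa [hc, Function.comp_def] using this
  have hconjg'top : Tendsto (fun x => c (g' x)) atTop (nhds 0) := by
    have := (Complex.continuous_conj.tendsto 0).comp hg'top
    simpa [hc, Function.comp_def] using this
  have hconjgbot : Tendsto (fun x => c (g x)) atBot (nhds 0) := by
    have := (Complex.continuous_conj.tendsto 0).comp hgbot
    simpa [hc, Function.comp_def] using this
  have hconjg'bot : Tendsto (fun x => c (g' x)) atBot (nhds 0) := by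
    have := (Complex.continuous_conj.tendsto 0).comp hg'bot
    simpa [hc, Function.comp_def] using this
  have hWtop : Tendsto W atTop (nhds 0) := by
    have := (hf'top.mul hconjgtop).sub (hftop.mul hconjg'top)
    simpa using this
  have hWbot : Tendsto W atBot (nhds 0) := by
    have := (hf'bot.mul hconjgbot).sub (hfbot.mul hconjg'bot)
    simpa using this
  -- integral over (0, ∞)
  have hIoi : ∫ x in Ioi (0:ℝ), D x = 0 - Wp 0 := by
    apply integral_Ioi_of_hasDerivAt_of_tendsto
    · rw [← Ioi_insert]
      rw [continuousWithinAt_insert_self]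
      unfold ContinuousWithinAt
      have : Wp 0 = fp * c (g 0) - f 0 * c gp := if_pos rfl
      rw [this]
      apply hWlimp.congr'
      filter_upwards [self_mem_nhdsWithin] with x (hx : x ∈ Ioi (0:ℝ))
      exact (hWpW x (ne_of_gt hx)).symm
    · intro x hx
      have hne : x ≠ 0 := ne_of_gt hx
      apply (hWderiv x hne).congr_of_eventuallyEq
      filter_upwards [isOpen_ne.mem_nhds hne] with y hy
      exact hWpW y hy
    · exact hDint.integrableOn
    · apply hWtop.congr'
      filter_upwards [eventually_gt_atTop 0] with x hx
      exact (hWpW x (ne_of_gt hx)).symm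
  -- integral over (-∞, 0]
  have hIic : ∫ x in Iic (0:ℝ), D x = Wm 0 - 0 := by
    apply integral_Iic_of_hasDerivAt_of_tendsto
    · rw [← Iio_insert]
      rw [continuousWithinAt_insert_self]
      unfold ContinuousWithinAt
      have : Wm 0 = fm * c (g 0) - f 0 * c gm := if_pos rfl
      rw [this]
      apply hWlimm.congr'
      filter_upwards [self_mem_nhdsWithin] with x (hx : x ∈ Iio (0:ℝ))
      exact (hWmW x (ne_of_lt hx)).symm
    · intro x hx
      have hne : x ≠ 0 := ne_of_lt hx
      apply (hWderiv x hne).congr_of_eventuallyEq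
      filter_upwards [isOpen_ne.mem_nhds hne] with y hy
      exact hWmW y hy
    · exact hDint.integrableOn
    · apply hWbot.congr'
      filter_upwards [eventually_lt_atBot 0] with x hx
      exact (hWmW x (ne_of_lt hx)).symm
  have htotal : ∫ x : ℝ, D x = Wm 0 - Wp 0 := by
    rw [← intervalIntegral.integral_Iic_add_Ioi hDint.integrableOn hDint.integrableOn, hIoi, hIic]
    ring
  have hDsub : ∫ x : ℝ, D x =
      (∫ x : ℝ, f'' x * c (g x)) - ∫ x : ℝ, f x * c (g'' x) := by
    simp only [hD]
    exact integral_sub hint1 hint2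
  have hWm0 : Wm 0 = fm * c (g 0) - f 0 * c gm := if_pos rfl
  have hWp0 : Wp 0 = fp * c (g 0) - f 0 * c gp := if_pos rfl
  have h1 : (∫ x : ℝ, (-f'' x) * c (g x)) = -∫ x : ℝ, f'' x * c (g x) := by
    rw [← integral_neg]; congr 1; ext x; ring
  have h2 : (∫ x : ℝ, f x * c (-g'' x)) = -∫ x : ℝ, f x * c (g'' x) := by
    rw [← integral_neg]; congr 1; ext x; simp [mul_comm]
  rw [h1, h2]
  have : -(∫ x : ℝ, f'' x * c (g x)) - -∫ x : ℝ, f x * c (g'' x) = -∫ x : ℝ, D x := by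
    rw [hDsub]; ring
  rw [this, htotal, hWm0, hWp0, map_sub]
  ring
end
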